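/- Linear Bellman completeness implies existence of a linear transition model: Suppose φ : S×A → R^d has positive definite covariance Σ = E_ν[φφᵀ] under ν, and suppose for every w₁ ∈ B_W there exists w₂ ∈ B_W with E_ν[(w₂ᵀφ(s,a) − r(s,a) − γ E_{s'∼P(s,a)}[w₁ᵀφ(s',π)])²] = 0. Then there exist ρ ∈ B_W and M ∈ R^{d×d} such that E_ν[||Mφ(s,a) − γE_{s'∼P(s,a)}[φ(s',π)]||²₂ + (ρᵀφ(s,a) − r(s,a))²] = 0 and ||M||₂ ≤ sqrt(1 − ||ρ||²₂/W²). -/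

import Mathlib

open Finset

set_option maxHeartbeats 1000000 in
theorem linear_bc_implies_linear_model
    (d : ℕ) (Ω : Type) [Fintype Ω]
    (ν : Ω → ℝ) (φ nxt : Ω → EuclideanSpace ℝ (Fin d)) (r : Ω → ℝ)
    (γ W : ℝ) (hγ0 : 0 ≤ γ) (hγ1 : γ < 1) (hW : 0 < W)
    (hν0 : ∀ ω, 0 ≤ ν ω) (hν1 : ∑ ω, ν ω = 1)
    (hr : ∀ ω, |r ω| ≤ 1)
    -- Σ(φ) positive definite: w ↦ wᵀφ is injective in L²(ν)
    (hpd : ∀ x : EuclideanSpace ℝ (Fin d), x ≠ 0 →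
      0 < ∑ ω, ν ω * (inner ℝ x (φ ω) : ℝ) ^ 2)
    -- exact linear Bellman completeness at radius W
    (hbc : ∀ w₁ : EuclideanSpace ℝ (Fin d), ‖w₁‖ ≤ W →
      ∃ w₂ : EuclideanSpace ℝ (Fin d), ‖w₂‖ ≤ W ∧
        ∑ ω, ν ω *
          ((inner ℝ w₂ (φ ω) : ℝ) - r ω - γ * (inner ℝ w₁ (nxt ω) : ℝ)) ^ 2 = 0) :
    ∃ (ρ : EuclideanSpace ℝ (Fin d))
      (M : EuclideanSpace ℝ (Fin d) →L[ℝ] EuclideanSpace ℝ (Fin d)),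
      ‖ρ‖ ≤ W ∧ ‖M‖ ≤ Real.sqrt (1 - ‖ρ‖ ^ 2 / W ^ 2) ∧
      ∑ ω, ν ω *
        (‖M (φ ω) - γ • nxt ω‖ ^ 2 + ((inner ℝ ρ (φ ω) : ℝ) - r ω) ^ 2) = 0 := by
  classical
  -- pointwise-zero extraction
  have hzero : ∀ (f : Ω → ℝ), ∑ ω, ν ω * f ω ^ 2 = 0 → ∀ ω, ν ω ≠ 0 → f ω = 0 := by
    intro f hsum ω hω
    have h1 : ∀ i ∈ Finset.univ, 0 ≤ ν i * f i ^ 2 := fun i _ =>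
      mul_nonneg (hν0 i) (sq_nonneg _)
    have h2 := (Finset.sum_eq_zero_iff_of_nonneg h1).mp hsum ω (Finset.mem_univ ω)
    rcases mul_eq_zero.mp h2 with h | h
    · exact absurd h hω
    · exact pow_eq_zero_iff (two_ne_zero) |>.mp h
  -- uniqueness from positive definiteness
  have huniq : ∀ v v' : EuclideanSpace ℝ (Fin d),
      (∀ ω, ν ω ≠ 0 → (inner ℝ v (φ ω) : ℝ) = inner ℝ v' (φ ω)) → v = v' := by
    intro v v' h
    by_contra hne
    have hx : v - v' ≠ 0 := sub_ne_zero.mpr hne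
    have hpos := hpd (v - v') hx
    have hsum0 : ∑ ω, ν ω * (inner ℝ (v - v') (φ ω) : ℝ) ^ 2 = 0 := by
      apply Finset.sum_eq_zero
      intro ω _
      by_cases hω : ν ω = 0
      · simp [hω]
      · have h3 := h ω hω
        rw [inner_sub_left]
        simp [h3]
    rw [hsum0] at hpos
    exact lt_irrefl 0 hpos
  -- pointwise form of Bellman completeness
  have hT : ∀ w₁ : EuclideanSpace ℝ (Fin d), ‖w₁‖ ≤ W →
      ∃ v : EuclideanSpace ℝ (Fin d), ‖v‖ ≤ W ∧ ∀ ω, ν ω ≠ 0 →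
        (inner ℝ v (φ ω) : ℝ) = r ω + γ * inner ℝ w₁ (nxt ω) := by
    intro w₁ hw₁
    obtain ⟨w₂, hw₂, hsum⟩ := hbc w₁ hw₁
    refine ⟨w₂, hw₂, fun ω hω => ?_⟩
    have h4 := hzero _ hsum ω hω
    linarith
  -- ρ := image of 0
  obtain ⟨ρ, hρW, hρ⟩ := hT 0 (by simpa using hW.le)
  have hρr : ∀ ω, ν ω ≠ 0 → (inner ℝ ρ (φ ω) : ℝ) = r ω := by
    intro ω hω
    have h5 := hρ ω hω
    simpa using h5
  -- existence of the linear part, for every w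
  have hQ : ∀ w : EuclideanSpace ℝ (Fin d), ∃ v : EuclideanSpace ℝ (Fin d),
      ∀ ω, ν ω ≠ 0 → (inner ℝ v (φ ω) : ℝ) = γ * inner ℝ w (nxt ω) := by
    intro w
    by_cases hw : w = 0
    · exact ⟨0, by simp [hw]⟩
    · have hwn : (0:ℝ) < ‖w‖ := norm_pos_iff.mpr hw
      have hu : ‖(W / ‖w‖) • w‖ ≤ W := by
        rw [norm_smul, Real.norm_eq_abs, abs_of_pos (div_pos hW hwn)]
        rw [div_mul_cancel₀ _ hwn.ne']
      obtain ⟨v', hv'W, hv'⟩ := hT ((W / ‖w‖) • w) hu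
      refine ⟨(‖w‖ / W) • (v' - ρ), fun ω hω => ?_⟩
      rw [real_inner_smul_left, inner_sub_left, hv' ω hω, hρr ω hω, real_inner_smul_left]
      have : (W / ‖w‖) * (inner ℝ w (nxt ω) : ℝ) = (W / ‖w‖) * inner ℝ w (nxt ω) := rfl
      field_simp
      ring
  set f : EuclideanSpace ℝ (Fin d) → EuclideanSpace ℝ (Fin d) :=
    fun w => Classical.choose (hQ w) with hf
  have hfspec : ∀ w, ∀ ω, ν ω ≠ 0 →
      (inner ℝ (f w) (φ ω) : ℝ) = γ * inner ℝ w (nxt ω) :=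
    fun w => Classical.choose_spec (hQ w)
  have hadd : ∀ w w', f (w + w') = f w + f w' := by
    intro w w'
    apply huniq
    intro ω hω
    rw [hfspec _ ω hω, inner_add_left, inner_add_left, hfspec _ ω hω, hfspec _ ω hω]
    ring
  have hsmul : ∀ (c : ℝ) w, f (c • w) = c • f w := by
    intro c w
    apply huniq
    intro ω hω
    rw [hfspec _ ω hω, inner_smul_left, inner_smul_left, hfspec _ ω hω]
    simp; ring
  set A : EuclideanSpace ℝ (Fin d) →ₗ[ℝ] EuclideanSpace ℝ (Fin d) :=
    { toFun := f, map_add' := hadd, map_smul' := hsmul } with hA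
  set A' := LinearMap.toContinuousLinearMap A with hA'
  set M := ContinuousLinearMap.adjoint A' with hM
  have hMφ : ∀ ω, ν ω ≠ 0 → M (φ ω) = γ • nxt ω := by
    intro ω hω
    apply ext_inner_left ℝ
    intro v
    rw [hM, ContinuousLinearMap.adjoint_inner_right, real_inner_smul_right]
    exact hfspec v ω hω
  -- ball mapping property
  have hball : ∀ w : EuclideanSpace ℝ (Fin d), ‖w‖ ≤ W → ‖ρ + f w‖ ≤ W := by
    intro w hw
    obtain ⟨v, hvW, hv⟩ := hT w hw
    have : ρ + f w = v := by
      apply huniq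
      intro ω hω
      rw [inner_add_left, hρr ω hω, hfspec w ω hω, hv ω hω]
    rwa [this]
  have hsq : ∀ w : EuclideanSpace ℝ (Fin d), ‖w‖ ≤ W →
      ‖f w‖ ^ 2 ≤ W ^ 2 - ‖ρ‖ ^ 2 := by
    intro w hw
    have h1 := hball w hw
    have h2 : ‖ρ - f w‖ ≤ W := by
      have hn : ‖(-w : EuclideanSpace ℝ (Fin d))‖ ≤ W := by rwa [norm_neg]
      have := hball (-w) hn
      have hfneg : f (-w) = - f w := by
        have := hsmul (-1) w; simpa using this
      rw [hfneg] at this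
      simpa [sub_eq_add_neg] using this
    have hp : ‖ρ + f w‖ ^ 2 + ‖ρ - f w‖ ^ 2 = 2 * (‖ρ‖ ^ 2 + ‖f w‖ ^ 2) := by
      have := parallelogram_law_with_norm ℝ ρ (f w)
      nlinarith [this]
    nlinarith [norm_nonneg (ρ + f w), norm_nonneg (ρ - f w), sq_nonneg W]
  -- the norm bound constant
  set c : ℝ := Real.sqrt (1 - ‖ρ‖ ^ 2 / W ^ 2) with hc
  have hρ2 : ‖ρ‖ ^ 2 ≤ W ^ 2 := by
    nlinarith [norm_nonneg ρ]
  have hcnn : 0 ≤ 1 - ‖ρ‖ ^ 2 / W ^ 2 := by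
    rw [sub_nonneg, div_le_one (by positivity)]
    exact hρ2
  have hc2 : c ^ 2 = 1 - ‖ρ‖ ^ 2 / W ^ 2 := Real.sq_sqrt hcnn
  have hc0 : 0 ≤ c := Real.sqrt_nonneg _
  have hbound : ∀ x : EuclideanSpace ℝ (Fin d), ‖A' x‖ ≤ c * ‖x‖ := by
    intro x
    by_cases hx : x = 0
    · simp [hx]
    · have hxn : (0:ℝ) < ‖x‖ := norm_pos_iff.mpr hx
      have hWx : ‖(W / ‖x‖) • x‖ ≤ W := by
        rw [norm_smul, Real.norm_eq_abs, abs_of_pos (div_pos hW hxn)]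
        rw [div_mul_cancel₀ _ hxn.ne']
      have h6 := hsq ((W / ‖x‖) • x) hWx
      have h7 : f ((W / ‖x‖) • x) = (W / ‖x‖) • f x := hsmul _ _
      rw [h7, norm_smul, Real.norm_eq_abs, abs_of_pos (div_pos hW hxn),
        mul_pow] at h6
      have hAx : A' x = f x := rfl
      rw [hAx]
      have hsq2 : ‖f x‖ ^ 2 ≤ (c * ‖x‖) ^ 2 := by
        rw [mul_pow, hc2]
        have hW2 : (0:ℝ) < W ^ 2 := by positivity
        have hx2 : (0:ℝ) < ‖x‖ ^ 2 := by positivity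
        rw [div_pow, div_mul_eq_mul_div, div_le_iff₀ hx2] at h6
        have heq : (1 - ‖ρ‖ ^ 2 / W ^ 2) * ‖x‖ ^ 2
            = ((W ^ 2 - ‖ρ‖ ^ 2) * ‖x‖ ^ 2) / W ^ 2 := by field_simp
        rw [heq, le_div_iff₀ hW2]
        nlinarith [h6]
      have := Real.sqrt_le_sqrt hsq2
      rwa [Real.sqrt_sq (norm_nonneg _), Real.sqrt_sq (by positivity)] at this
  have hMnorm : ‖M‖ ≤ c := by
    rw [hM, show ‖ContinuousLinearMap.adjoint A'‖ = ‖A'‖ from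
      LinearIsometryEquiv.norm_map _ A']
    exact ContinuousLinearMap.opNorm_le_bound _ hc0 hbound
  refine ⟨ρ, M, hρW, hMnorm, ?_⟩
  apply Finset.sum_eq_zero
  intro ω _
  by_cases hω : ν ω = 0
  · simp [hω]
  · rw [hMφ ω hω, hρr ω hω]
    simp
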